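/- Let α ∈ ℝ/ℤ, ε > 0, and let T(x,y) = (x+α, y+x) on 𝕋². Let U ⊆ 𝕋² be the open ball of radius ε/4 centered at (0,0) (in the max metric ‖·‖ given by distance to 0 on each coordinate). If n ∈ ℤ satisfies U ∩ T^{−n}U ∩ T^{−2n}U ≠ ∅, then ‖n²α‖ < ε, where ‖x‖ denotes the distance from x ∈ ℝ/ℤ to 0. -/

import Mathlib

/-- The skew product `T(x, y) = (x + α, y + x)` on the 2-torus `𝕋² = (ℝ/ℤ)²`,
as an invertible transformation. -/
noncomputable def skew (α : UnitAddCircle) : Equiv.Perm (UnitAddCircle × UnitAddCircle) where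
  toFun p := (p.1 + α, p.2 + p.1)
  invFun p := (p.1 - α, p.2 - (p.1 - α))
  left_inv := by
    rintro ⟨x, y⟩
    simp only [Prod.mk.injEq]
    constructor <;> abel
  right_inv := by
    rintro ⟨x, y⟩
    simp only [Prod.mk.injEq]
    constructor <;> abel

lemma skew_zpow (α : UnitAddCircle) (m : ℤ) (z : UnitAddCircle × UnitAddCircle) :
    (skew α ^ m) z = (z.1 + m • α, z.2 + m • z.1 + (m * (m - 1) / 2) • α) := by
  induction m using Int.induction_on generalizing z with
  | zero => simp
  | succ k ih =>
    rw [zpow_add_one, Equiv.Perm.mul_apply, ih]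
    have h1 : skew α z = (z.1 + α, z.2 + z.1) := rfl
    have h2 : ((k : ℤ) + 1) * ((k : ℤ) + 1 - 1) / 2 = (k : ℤ) * ((k : ℤ) - 1) / 2 + k := by
      have e : ((k : ℤ) + 1) * ((k : ℤ) + 1 - 1) = (k : ℤ) * ((k : ℤ) - 1) + (k : ℤ) * 2 := by ring
      rw [e, Int.add_mul_ediv_right _ _ (by norm_num : (2:ℤ) ≠ 0)]
    rw [h1, h2]
    ext
    · show z.1 + α + (k : ℤ) • α = z.1 + ((k : ℤ) + 1) • α
      rw [add_smul, one_smul]; abel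
    · show z.2 + z.1 + (k : ℤ) • (z.1 + α) + ((k : ℤ) * ((k : ℤ) - 1) / 2) • α =
        z.2 + ((k : ℤ) + 1) • z.1 + ((k : ℤ) * ((k : ℤ) - 1) / 2 + (k : ℤ)) • α
      rw [smul_add, add_smul, add_smul, one_smul]; abel
  | pred k ih =>
    have : (-(k : ℤ) - 1) = (-(k:ℤ)) - 1 := rfl
    rw [this, zpow_sub_one, Equiv.Perm.mul_apply, ih]
    have h1 : (skew α)⁻¹ z = (z.1 - α, z.2 - (z.1 - α)) := rfl
    have h2 : (-(k : ℤ) - 1) * (-(k : ℤ) - 1 - 1) / 2 = (-(k:ℤ)) * (-(k:ℤ) - 1) / 2 + k + 1 := by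
      have e : (-(k : ℤ) - 1) * (-(k : ℤ) - 1 - 1) = (-(k:ℤ)) * (-(k:ℤ) - 1) + ((k:ℤ) + 1) * 2 := by ring
      rw [e, Int.add_mul_ediv_right _ _ (by norm_num : (2:ℤ) ≠ 0)]
      ring
    rw [h1, h2]
    ext
    · show z.1 - α + (-(k : ℤ)) • α = z.1 + (-(k : ℤ) - 1) • α
      rw [sub_smul, neg_smul, one_smul]; abel
    · show z.2 - (z.1 - α) + (-(k : ℤ)) • (z.1 - α) + ((-(k:ℤ)) * (-(k:ℤ) - 1) / 2) • α =
        z.2 + (-(k : ℤ) - 1) • z.1 + ((-(k:ℤ)) * (-(k:ℤ) - 1) / 2 + (k:ℤ) + 1) • α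
      rw [smul_sub, sub_smul, neg_smul, add_smul, add_smul, one_smul, neg_smul]; abel

theorem stmt_13 (α : UnitAddCircle) (ε : ℝ) (hε : 0 < ε) (n : ℤ)
    (U : Set (UnitAddCircle × UnitAddCircle))
    (hU : U = {q : UnitAddCircle × UnitAddCircle | ‖q.1‖ < ε / 4 ∧ ‖q.2‖ < ε / 4})
    (hn : ∃ z, z ∈ U ∧ (skew α ^ n) z ∈ U ∧ (skew α ^ (2 * n)) z ∈ U) :
    ‖(n ^ 2) • α‖ < ε := by
  obtain ⟨z, hz, hb, hc⟩ := hn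
  rw [hU] at hz hb hc
  have hdvd : (2:ℤ) ∣ n * (n - 1) := by
    have h' : Even (n * (n - 1)) := by
      rw [show n * (n - 1) = (n - 1) * (n - 1 + 1) from by ring]
      exact Int.even_mul_succ_self (n - 1)
    exact h'.two_dvd
  have he : (2 * n) * (2 * n - 1) / 2 = n * (2 * n - 1) := by
    rw [show (2 * n) * (2 * n - 1) = n * (2 * n - 1) * 2 from by ring,
      Int.mul_ediv_cancel _ two_ne_zero]
  have h2d : 2 * (n * (n - 1) / 2) = n * (n - 1) := by
    rw [mul_comm]; exact Int.ediv_mul_cancel hdvd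
  have hcoef : (2 * n) * (2 * n - 1) / 2 - 2 * (n * (n - 1) / 2) = n ^ 2 := by
    rw [he, h2d]; ring
  have key : (n ^ 2) • α =
      (((skew α ^ (2 * n)) z).2 - ((skew α ^ n) z).2) + (z.2 - ((skew α ^ n) z).2) := by
    rw [skew_zpow, skew_zpow, ← hcoef, sub_smul, two_mul (n * (n - 1) / 2), add_smul,
      show ((2 * n : ℤ)) • z.1 = n • z.1 + n • z.1 from by rw [two_mul, add_smul]]
    dsimp only
    abel
  calc ‖(n ^ 2) • α‖
      = ‖(((skew α ^ (2 * n)) z).2 - ((skew α ^ n) z).2) + (z.2 - ((skew α ^ n) z).2)‖ := by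
        rw [key]
    _ ≤ ‖((skew α ^ (2 * n)) z).2 - ((skew α ^ n) z).2‖ + ‖z.2 - ((skew α ^ n) z).2‖ :=
        norm_add_le _ _
    _ ≤ (‖((skew α ^ (2 * n)) z).2‖ + ‖((skew α ^ n) z).2‖) +
        (‖z.2‖ + ‖((skew α ^ n) z).2‖) := add_le_add (norm_sub_le _ _) (norm_sub_le _ _)
    _ < ε := by
        have h1 := hz.2
        have h2 := hb.2
        have h3 := hc.2
        linarith
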